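/- Let ω be a unit of R. Then there exists a K-linear map ε : R → K with ε(ω) = 0 and ε(ω·α) = 1, and for any such ε the pair (Δ_ω, ε) is a Frobenius structure on R; more precisely: (i) Δ_ω(u·v) = (u ⊗ 1)·Δ_ω(v) and Δ_ω(u·v) = Δ_ω(u)·(1 ⊗ v) for all u, v ∈ R (products taken in the K-algebra R ⊗[K] R); (ii) applying id ⊗ ε to Δ_ω(u) gives u, and applying ε ⊗ id to Δ_ω(u) gives u, for all u ∈ R (after identifying R ⊗[K] K and K ⊗[K] R with R); and (iii) Δ_ω is coassociative: (Δ_ω ⊗ id) ∘ Δ_ω and (id ⊗ Δ_ω) ∘ Δ_ω agree under the associativity isomorphism (R ⊗ R) ⊗ R ≅ R ⊗ (R ⊗ R). -/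

import Mathlib

open Polynomial TensorProduct

noncomputable section

variable {K : Type*} [CommRing K]

/-- The quadratic `K`-algebra `K[X]/(X² - s·X + p)`. -/
abbrev Quad (s p : K) : Type _ := AdjoinRoot (X ^ 2 - C s * X + C p)

/-- The image of `X`, i.e. the generator `α`. -/
def qα (s p : K) : Quad s p := AdjoinRoot.root _

lemma quad_aeval_root (s p : K) :
    (aeval (qα s p)) (X ^ 2 - C s * X + C p) = 0 := by
  simp [qα, AdjoinRoot.aeval_eq, AdjoinRoot.mk_self]

/-- The involution `σ` of the quadratic algebra, with `σ α = s - α`. -/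
def qσ (s p : K) : Quad s p →ₐ[K] Quad s p :=
  AdjoinRoot.liftAlgHom _ (Algebra.ofId K (Quad s p)) (algebraMap K (Quad s p) s - qα s p) (show
    aeval (algebraMap K (Quad s p) s - qα s p) (X ^ 2 - C s * X + C p) = 0 by
    have h := quad_aeval_root s p
    simp only [map_add, map_sub, map_mul, map_pow, aeval_X, aeval_C] at h ⊢
    linear_combination h)

/-- The coproduct `Δ_ω : u ↦ u ⊗ (ω·α) - (u·σ(α)) ⊗ ω`, as a `K`-linear map. -/
def qΔ (s p : K) (w : Quad s p) : Quad s p →ₗ[K] Quad s p ⊗[K] Quad s p :=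
  (TensorProduct.mk K (Quad s p) (Quad s p)).flip (w * qα s p)
    - ((TensorProduct.mk K (Quad s p) (Quad s p)).flip w).comp
        (LinearMap.mulRight K (qσ s p (qα s p)))


lemma quad_sigma_alpha (s p : K) :
    qσ s p (qα s p) = s • (1 : Quad s p) - qα s p := by
  rw [show qσ s p (qα s p) = algebraMap K (Quad s p) s - qα s p from
    AdjoinRoot.liftAlgHom_root _ _ _ _, Algebra.algebraMap_eq_smul_one]

lemma quad_alpha_mul_alpha (s p : K) :
    qα s p * qα s p = s • qα s p - p • (1 : Quad s p) := by
  have h := quad_aeval_root s p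
  simp only [map_add, map_sub, map_mul, map_pow, aeval_X, aeval_C] at h
  have h2 : qα s p * qα s p = algebraMap K _ s * qα s p - algebraMap K _ p := by
    linear_combination h
  rw [h2, Algebra.smul_def, Algebra.smul_def, mul_one]

lemma qDelta_apply (s p : K) (w u : Quad s p) :
    qΔ s p w u = u ⊗ₜ[K] (w * qα s p) - (u * qσ s p (qα s p)) ⊗ₜ[K] w := rfl

lemma quad_dec (s p : K) (u : Quad s p) :
    ∃ a c : K, u = a • (1 : Quad s p) + c • qα s p := by
  have hpow : ∀ n : ℕ, ∃ a c : K, (qα s p) ^ n = a • (1 : Quad s p) + c • qα s p := by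
    intro n
    induction n with
    | zero => exact ⟨1, 0, by simp⟩
    | succ n ih =>
      obtain ⟨a, c, h⟩ := ih
      refine ⟨-(c * p), a + c * s, ?_⟩
      rw [pow_succ, h, add_mul, smul_mul_assoc, smul_mul_assoc, one_mul,
        quad_alpha_mul_alpha]
      module
  obtain ⟨f, rfl⟩ := AdjoinRoot.mk_surjective u
  induction f using Polynomial.induction_on' with
  | add f g hf hg =>
    obtain ⟨a, c, h1⟩ := hf
    obtain ⟨a', c', h2⟩ := hg
    exact ⟨a + a', c + c', by rw [map_add, h1, h2]; module⟩
  | monomial n k =>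
    obtain ⟨a, c, h⟩ := hpow n
    refine ⟨k * a, k * c, ?_⟩
    have hmon : (AdjoinRoot.mk _ : K[X] →+* Quad s p) (monomial n k)
        = k • (qα s p) ^ n := by
      rw [← C_mul_X_pow_eq_monomial, map_mul, map_pow, AdjoinRoot.mk_X,
        AdjoinRoot.mk_C, Algebra.smul_def]
      rfl
    rw [hmon, h]
    module

set_option maxHeartbeats 2000000
set_option synthInstance.maxHeartbeats 1000000

/-- For any unit `ω` there is a `K`-linear counit `ε` with `ε ω = 0`, `ε (ω·α) = 1`,
and for any such `ε` the pair `(Δ_ω, ε)` is a Frobenius structure (Frobenius relations,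
both counit laws, and coassociativity). -/
theorem stmt2 (s p : K) (ω : (Quad s p)ˣ) :
    (∃ ε : Quad s p →ₗ[K] K,
        ε (ω : Quad s p) = 0 ∧ ε ((ω : Quad s p) * qα s p) = 1) ∧
    (∀ u v : Quad s p,
        qΔ s p (ω : Quad s p) (u * v)
          = (u ⊗ₜ[K] (1 : Quad s p)) * qΔ s p (ω : Quad s p) v ∧
        qΔ s p (ω : Quad s p) (u * v)
          = qΔ s p (ω : Quad s p) u * ((1 : Quad s p) ⊗ₜ[K] v)) ∧
    (∀ ε : Quad s p →ₗ[K] K,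
        ε (ω : Quad s p) = 0 → ε ((ω : Quad s p) * qα s p) = 1 →
        ∀ u : Quad s p,
          (TensorProduct.rid K (Quad s p))
            ((LinearMap.lTensor (Quad s p) ε) (qΔ s p (ω : Quad s p) u)) = u ∧
          (TensorProduct.lid K (Quad s p))
            ((LinearMap.rTensor (Quad s p) ε) (qΔ s p (ω : Quad s p) u)) = u) ∧
    (∀ u : Quad s p,
        (TensorProduct.assoc K (Quad s p) (Quad s p) (Quad s p))
            ((LinearMap.rTensor (Quad s p) (qΔ s p (ω : Quad s p)))
              (qΔ s p (ω : Quad s p) u))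
          = (LinearMap.lTensor (Quad s p) (qΔ s p (ω : Quad s p)))
              (qΔ s p (ω : Quad s p) u)) := by
  refine ⟨?_, ?_, ?_, ?_⟩
  · -- existence of ε
    rcases subsingleton_or_nontrivial K with hK | hK
    · exact ⟨0, Subsingleton.elim _ _, Subsingleton.elim _ _⟩
    have hm : (X ^ 2 - C s * X + C p).Monic := by monicity!
    have hdeg : (X ^ 2 - C s * X + C p).degree = 2 := by compute_degree!
    refine ⟨(lcoeff K 1) ∘ₗ (AdjoinRoot.modByMonicHom hm) ∘ₗ
      (LinearMap.mulLeft K (↑ω⁻¹ : Quad s p)), ?_, ?_⟩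
    · have h1 : (↑ω⁻¹ : Quad s p) * ↑ω = 1 := ω.inv_mul
      have h2 : (1 : Quad s p) = AdjoinRoot.mk _ 1 := by simp
      simp only [LinearMap.coe_comp, Function.comp_apply, LinearMap.mulLeft_apply, h1, h2,
        AdjoinRoot.modByMonicHom_mk]
      rw [(modByMonic_eq_self_iff hm).2
        (by rw [hdeg]; exact lt_of_le_of_lt degree_one_le (by norm_num))]
      simp [coeff_one]
    · have h1 : (↑ω⁻¹ : Quad s p) * ((↑ω : Quad s p) * qα s p) = AdjoinRoot.mk _ X := by
        rw [← mul_assoc, ω.inv_mul, one_mul, AdjoinRoot.mk_X]; rfl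
      simp only [LinearMap.coe_comp, Function.comp_apply, LinearMap.mulLeft_apply, h1,
        AdjoinRoot.modByMonicHom_mk]
      rw [(modByMonic_eq_self_iff hm).2 (by rw [hdeg, degree_X]; norm_num)]
      simp
  · -- Frobenius relations
    intro u v
    constructor
    · simp [qDelta_apply, mul_sub, Algebra.TensorProduct.tmul_mul_tmul, mul_assoc]
    · obtain ⟨a, c, rfl⟩ := quad_dec s p v
      simp only [qDelta_apply, quad_sigma_alpha, quad_alpha_mul_alpha, mul_add, add_mul,
        mul_sub, sub_mul, mul_smul_comm, smul_mul_assoc, mul_one, one_mul, mul_assoc,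
        Algebra.TensorProduct.tmul_mul_tmul,
        tmul_add, add_tmul, tmul_sub, sub_tmul, tmul_smul, ← smul_tmul', smul_sub, smul_add]
      module
  · -- counit laws
    intro ε h1 h2 u
    constructor
    · simp [qDelta_apply, h1, h2]
    · have hu : ∃ a c : K, u = a • (↑ω : Quad s p) + c • ((↑ω : Quad s p) * qα s p) := by
        obtain ⟨a, c, h⟩ := quad_dec s p ((↑ω⁻¹ : Quad s p) * u)
        refine ⟨a, c, ?_⟩
        have h2 : (↑ω : Quad s p) * ((↑ω⁻¹ : Quad s p) * u) = u := by
          rw [← mul_assoc, ω.mul_inv, one_mul]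
        rw [← h2, h, mul_add, mul_smul_comm, mul_smul_comm, mul_one]
      obtain ⟨a, c, hu⟩ := hu
      subst hu
      simp only [qDelta_apply, quad_sigma_alpha, quad_alpha_mul_alpha, map_sub, map_add,
        map_smul, LinearMap.rTensor_tmul, lid_tmul, mul_add, add_mul, mul_sub, sub_mul,
        mul_smul_comm, smul_mul_assoc, mul_one, one_mul, mul_assoc, tmul_add, add_tmul,
        tmul_sub, sub_tmul, tmul_smul, ← smul_tmul', smul_sub, smul_add, h1, h2]
      module
  · -- coassociativity
    intro u
    simp only [qDelta_apply, quad_sigma_alpha, quad_alpha_mul_alpha, map_sub, map_add,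
      map_smul, LinearMap.rTensor_tmul, LinearMap.lTensor_tmul, assoc_tmul, mul_add,
      add_mul, mul_sub, sub_mul, mul_smul_comm, smul_mul_assoc, mul_one, one_mul,
      mul_assoc, tmul_add, add_tmul, tmul_sub, sub_tmul, tmul_smul, ← smul_tmul',
      smul_sub, smul_add]
    module


end
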